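/- Let p : E ⥤ B be a Grothendieck fibration admitting a right adjoint r : B ⥤ E such that the counit of the adjunction p ⊣ r is the identity (so p ∘ r = id). Let E_R denote the full subcategory of E on the objects that are injective with respect to vertical morphisms (i.e., the objects Z such that for every vertical e : X ⟶ Y and every g : X ⟶ Z there is a unique h : Y ⟶ Z with h ∘ e = g). Then the restriction of p to E_R is an equivalence of categories E_R ≃ B, with quasi-inverse induced by r. -/

import Mathlib

open CategoryTheory Limits

universe v u v' u'

/-- An orthogonal factorization system `(L, R)` on a category `C`. -/
structure IsOFS {C : Type u} [Category.{v} C] (L R : MorphismProperty C) : Prop where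
  iso_left : ∀ {X Y : C} (f : X ⟶ Y), IsIso f → L f
  iso_right : ∀ {X Y : C} (f : X ⟶ Y), IsIso f → R f
  comp_left : ∀ {X Y Z : C} (f : X ⟶ Y) (g : Y ⟶ Z), L f → L g → L (f ≫ g)
  comp_right : ∀ {X Y Z : C} (f : X ⟶ Y) (g : Y ⟶ Z), R f → R g → R (f ≫ g)
  factor : ∀ {X Y : C} (f : X ⟶ Y), ∃ (Z : C) (e : X ⟶ Z) (m : Z ⟶ Y), L e ∧ R m ∧ e ≫ m = f
  lift : ∀ {A B X Y : C} (e : A ⟶ B) (m : X ⟶ Y) (u : A ⟶ X) (v : B ⟶ Y),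
    L e → R m → u ≫ m = e ≫ v → ∃! d : B ⟶ X, e ≫ d = u ∧ d ≫ m = v

/-- A right stable orthogonal factorization system: pullbacks of morphisms in `L`
along morphisms in `R` exist and lie in `L`. -/
structure IsRightStableOFS {C : Type u} [Category.{v} C] (L R : MorphismProperty C)
    extends IsOFS L R : Prop where
  right_stable : ∀ {A B D : C} (g : B ⟶ D) (m : A ⟶ D), L g → R m →
    ∃ (P : C) (pfst : P ⟶ A) (psnd : P ⟶ B), L pfst ∧ IsPullback pfst psnd m g

/-- A cartesian factorization system: an OFS where `L` satisfies two-out-of-three and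
pullbacks of morphisms in `L` along morphisms in `R` exist and lie in `L`. -/
structure IsCartesianFS {C : Type u} [Category.{v} C] (L R : MorphismProperty C)
    extends IsOFS L R : Prop where
  left_two_of_three : ∀ {X Y Z : C} (f : X ⟶ Y) (g : Y ⟶ Z), L g → L (f ≫ g) → L f
  right_stable : ∀ {A B D : C} (g : B ⟶ D) (m : A ⟶ D), L g → R m →
    ∃ (P : C) (pfst : P ⟶ A) (psnd : P ⟶ B), L pfst ∧ IsPullback pfst psnd m g

/-- An object `X` is `L`-injective if every extension problem along a morphism of `L`
has a unique solution. -/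
def LInjective {C : Type u} [Category.{v} C] (L : MorphismProperty C) (X : C) : Prop :=
  ∀ {A B : C} (e : A ⟶ B), L e → ∀ g : A ⟶ X, ∃! h : B ⟶ X, e ≫ h = g

/-- A morphism of `E` is `p`-vertical if its image under `p` is an isomorphism. -/
def Vert {E : Type u} {B : Type u'} [Category.{v} E] [Category.{v'} B] (p : E ⥤ B) :
    MorphismProperty E :=
  fun _ _ e => IsIso (p.map e)

/-- A morphism of `E` is `p`-cartesian (strongly cartesian). -/
def PCart {E : Type u} {B : Type u'} [Category.{v} E] [Category.{v'} B] (p : E ⥤ B) :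
    MorphismProperty E :=
  fun Z Y m => ∀ ⦃W : E⦄ (h : W ⟶ Y) (g : p.obj W ⟶ p.obj Z),
    g ≫ p.map m = p.map h → ∃! k : W ⟶ Z, p.map k = g ∧ k ≫ m = h

/-- `p` is a Grothendieck fibration: every morphism of `B` into the image of an object
of `E` has a `p`-cartesian lift. -/
def IsGrothFib {E : Type u} {B : Type u'} [Category.{v} E] [Category.{v'} B] (p : E ⥤ B) :
    Prop :=
  ∀ (Y : E) (b : B) (f : b ⟶ p.obj Y),
    ∃ (Z : E) (m : Z ⟶ Y) (hZ : p.obj Z = b), PCart p m ∧ p.map m = eqToHom hZ ≫ f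

/-- An object of `E` is injective with respect to `p`-vertical morphisms. -/
def VInjective {E : Type u} {B : Type u'} [Category.{v} E] [Category.{v'} B]
    (p : E ⥤ B) (Z : E) : Prop :=
  ∀ {X Y : E} (e : X ⟶ Y), Vert p e → ∀ g : X ⟶ Z, ∃! h : Y ⟶ Z, e ≫ h = g

/-- For a Grothendieck fibration `p` with right adjoint right inverse `r`, the restriction
of `p` to the full subcategory of objects injective with respect to vertical morphisms is
an equivalence, with quasi-inverse induced by `r`. -/
lemma rObj_vinj {E : Type u} {B : Type u'} [Category.{v} E] [Category.{v'} B]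
    (p : E ⥤ B) (r : B ⥤ E) (adj : p ⊣ r) (b : B) : VInjective p (r.obj b) := by
  intro X Y e he g
  haveI : IsIso (p.map e) := he
  refine ⟨(adj.homEquiv Y b) (inv (p.map e) ≫ (adj.homEquiv X b).symm g), ?_, ?_⟩
  · show e ≫ _ = g
    rw [← Adjunction.homEquiv_naturality_left, ← Category.assoc, IsIso.hom_inv_id,
      Category.id_comp, Equiv.apply_symm_apply]
  · intro h' hh'
    replace hh' : e ≫ h' = g := hh'
    apply (adj.homEquiv Y b).symm.injective
    rw [Equiv.symm_apply_apply]
    have := Adjunction.homEquiv_naturality_left_symm adj e h'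
    rw [hh'] at this
    rw [this]
    simp

lemma vert_iso {E : Type u} {B : Type u'} [Category.{v} E] [Category.{v'} B]
    (p : E ⥤ B) {X Y : E} (e : X ⟶ Y) (he : Vert p e)
    (hX : VInjective p X) (hY : VInjective p Y) : IsIso e := by
  obtain ⟨h, hh, _⟩ := hX e he (𝟙 X)
  replace hh : e ≫ h = 𝟙 X := hh
  refine ⟨h, hh, ?_⟩
  obtain ⟨k, hk, hk'⟩ := hY e he e
  have h1 := hk' (h ≫ e) (by show e ≫ h ≫ e = e; rw [← Category.assoc, hh, Category.id_comp])
  have h2 := hk' (𝟙 Y) (by simp)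
  rw [h1, ← h2]

theorem stmt11 {E : Type u} {B : Type u'} [Category.{v} E] [Category.{v'} B]
    (p : E ⥤ B) (hp : IsGrothFib p) (r : B ⥤ E) (adj : p ⊣ r)
    (hc : r ⋙ p = 𝟭 B) (hcounit : adj.counit = eqToHom hc) :
    (ObjectProperty.ι (VInjective p) ⋙ p).IsEquivalence ∧
      ∃ r' : B ⥤ ObjectProperty.FullSubcategory (VInjective p),
        r' ⋙ ObjectProperty.ι (VInjective p) = r ∧
        Nonempty ((ObjectProperty.ι (VInjective p) ⋙ p) ⋙ r' ≅
          𝟭 (ObjectProperty.FullSubcategory (VInjective p))) ∧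
        Nonempty (r' ⋙ (ObjectProperty.ι (VInjective p) ⋙ p) ≅ 𝟭 B) := by
  have hinj : ∀ b, VInjective p (r.obj b) := rObj_vinj p r adj
  let r' : B ⥤ ObjectProperty.FullSubcategory (VInjective p) := ObjectProperty.lift _ r hinj
  have hunit : ∀ Z : ObjectProperty.FullSubcategory (VInjective p), IsIso (adj.unit.app Z.obj) := by
    intro Z
    refine vert_iso p _ ?_ Z.2 (hinj _)
    show IsIso (p.map _)
    have h1 := adj.left_triangle_components Z.obj
    rw [hcounit, eqToHom_app] at h1
    haveI : IsIso (𝟙 (p.obj Z.obj)) := IsIso.id _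
    exact IsIso.of_isIso_fac_right h1
  have hunit' : ∀ Z : ObjectProperty.FullSubcategory (VInjective p),
      IsIso (X := Z) (Y := ((ObjectProperty.ι (VInjective p) ⋙ p) ⋙ r').obj Z)
        (ObjectProperty.homMk (adj.unit.app Z.obj)) := by
    intro Z
    let f : Z ⟶ ((ObjectProperty.ι (VInjective p) ⋙ p) ⋙ r').obj Z :=
      ObjectProperty.homMk (adj.unit.app Z.obj)
    haveI : IsIso ((ObjectProperty.ι (VInjective p)).map f) := hunit Z
    exact isIso_of_reflects_iso f (ObjectProperty.ι (VInjective p))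
  let unitIso : 𝟭 (ObjectProperty.FullSubcategory (VInjective p)) ≅
      (ObjectProperty.ι (VInjective p) ⋙ p) ⋙ r' :=
    NatIso.ofComponents (fun Z => @asIso _ _ _ _ _ (hunit' Z))
      (fun {Z W} f => InducedCategory.hom_ext (adj.unit.naturality f.hom))
  let counitIso : r' ⋙ (ObjectProperty.ι (VInjective p) ⋙ p) ≅ 𝟭 B := eqToIso hc
  let eqv : ObjectProperty.FullSubcategory (VInjective p) ≌ B :=
    CategoryTheory.Equivalence.mk (ObjectProperty.ι (VInjective p) ⋙ p) r' unitIso counitIso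
  exact ⟨eqv.isEquivalence_functor, r', rfl, ⟨unitIso.symm⟩, ⟨counitIso⟩⟩
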